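/- Let T > 0, N a positive integer, τ = T/N, t_k = kτ, and fix α ∈ (0,1). Then for every n with 2 ≤ n ≤ N, the L1⁺ coefficients of order α satisfy a_2^{(n)}(α) > a_3^{(n)}(α) > ⋯ > a_n^{(n)}(α) > 0; that is, for all 2 ≤ j < j′ ≤ n one has a_j^{(n)}(α) > a_{j′}^{(n)}(α) > 0. -/

import Mathlib

open Real Set intervalIntegral

/-- The kernel `ω_{1-β}(t) = t^{-β} / Γ(1-β)`. -/
noncomputable def omegaK (β t : ℝ) : ℝ := t ^ (-β) / Real.Gamma (1 - β)

/-- The L1⁺ coefficient `a_j^{(n)}(α)` on the uniform mesh `t_k = k τ`: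
`a_{n-k+1}^{(n)}(α) = (1/τ²) ∫_{t_{n-1}}^{t_n} ∫_{t_{k-1}}^{min(t, t_k)} ω_{1-α}(t-s) ds dt`,
expressed with `j = n - k + 1`, i.e. `k = n - j + 1`. -/
noncomputable def acoef (τ α : ℝ) (n j : ℕ) : ℝ :=
  (1 / τ ^ 2) * ∫ t in (((n : ℝ) - 1) * τ)..((n : ℝ) * τ),
      ∫ s in (((n : ℝ) - (j : ℝ)) * τ)..(min t (((n : ℝ) - (j : ℝ) + 1) * τ)),
        omegaK α (t - s)

lemma phi_pos {α : ℝ} (hα : α ∈ Set.Ioo (0 : ℝ) 1) {x : ℝ} (hx : 1 ≤ x) :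
    0 < (x + 1) ^ (2 - α) - 2 * x ^ (2 - α) + (x - 1) ^ (2 - α) := by
  have h := (strictConvexOn_rpow (p := 2 - α) (by linarith [hα.2])).2
    (show (x - 1 : ℝ) ∈ Ici (0 : ℝ) by simp; linarith)
    (show (x + 1 : ℝ) ∈ Ici (0 : ℝ) by simp; linarith)
    (by intro h; linarith [h])
    (by norm_num : (0:ℝ) < 1/2) (by norm_num : (0:ℝ) < 1/2) (by norm_num)
  simp only [smul_eq_mul] at h
  have e : (1/2 : ℝ) * (x - 1) + (1/2 : ℝ) * (x + 1) = x := by ring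
  rw [e] at h
  linarith

lemma phi_anti {α : ℝ} (hα : α ∈ Set.Ioo (0 : ℝ) 1) :
    StrictAntiOn (fun x : ℝ => (x + 1) ^ (2 - α) - 2 * x ^ (2 - α) + (x - 1) ^ (2 - α))
      (Set.Ici (1 : ℝ)) := by
  have h2 : (0:ℝ) < 2 - α := by linarith [hα.2]
  apply strictAntiOn_of_deriv_neg (convex_Ici 1)
  · have c1 : Continuous fun x : ℝ => (x + 1) ^ (2 - α) :=
      (Real.continuous_rpow_const h2.le).comp (continuous_add_right 1)
    have c2 : Continuous fun x : ℝ => x ^ (2 - α) := Real.continuous_rpow_const h2.le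
    have c3 : Continuous fun x : ℝ => (x - 1) ^ (2 - α) :=
      (Real.continuous_rpow_const h2.le).comp (continuous_sub_right 1)
    exact ((c1.sub (continuous_const.mul c2 : Continuous fun x : ℝ => 2 * x ^ (2 - α))).add
      c3).continuousOn
  · intro x hx
    rw [interior_Ici] at hx
    have hx1 : (1:ℝ) < x := hx
    have d1 : HasDerivAt (fun x : ℝ => (x + 1) ^ (2 - α)) ((2 - α) * (x + 1) ^ (2 - α - 1)) x := by
      have := (Real.hasDerivAt_rpow_const (x := x + 1) (p := 2 - α)
        (Or.inl (by linarith))).comp x ((hasDerivAt_id x).add_const 1)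
      simpa [Function.comp_def] using this
    have d2 : HasDerivAt (fun x : ℝ => x ^ (2 - α)) ((2 - α) * x ^ (2 - α - 1)) x :=
      Real.hasDerivAt_rpow_const (Or.inl (by linarith))
    have d3 : HasDerivAt (fun x : ℝ => (x - 1) ^ (2 - α)) ((2 - α) * (x - 1) ^ (2 - α - 1)) x := by
      have := (Real.hasDerivAt_rpow_const (x := x - 1) (p := 2 - α)
        (Or.inl (by linarith))).comp x ((hasDerivAt_id x).sub_const 1)
      simpa [Function.comp_def] using this
    have D := ((d1.sub (d2.const_mul 2)).add d3).deriv
    rw [show (fun x : ℝ => (x + 1) ^ (2 - α) - 2 * x ^ (2 - α) + (x - 1) ^ (2 - α)) =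
      ((fun x : ℝ => (x + 1) ^ (2 - α)) - fun y : ℝ => 2 * y ^ (2 - α)) + fun x : ℝ => (x - 1) ^ (2 - α)
      from rfl, D]
    have e : 2 - α - 1 = 1 - α := by ring
    rw [e]
    have hconc := (Real.strictConcaveOn_rpow (p := 1 - α) (by linarith [hα.2])
      (by linarith [hα.1])).2
      (show (x - 1 : ℝ) ∈ Ici (0:ℝ) by simp; linarith)
      (show (x + 1 : ℝ) ∈ Ici (0:ℝ) by simp; linarith)
      (by intro h; linarith [h])
      (by norm_num : (0:ℝ) < 1/2) (by norm_num : (0:ℝ) < 1/2) (by norm_num)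
    simp only [smul_eq_mul] at hconc
    have e2 : (1/2 : ℝ) * (x - 1) + (1/2 : ℝ) * (x + 1) = x := by ring
    rw [e2] at hconc
    nlinarith [hconc, h2]

lemma acoef_eq {τ : ℝ} (hτ : 0 < τ) {α : ℝ} (hα : α ∈ Set.Ioo (0 : ℝ) 1)
    {n j : ℕ} (hj : 2 ≤ j) (hjn : j ≤ n) :
    acoef τ α n j = (τ ^ (-α) / (Real.Gamma (1 - α) * ((1 - α) * (2 - α)))) *
      ((j : ℝ) ^ (2 - α) - 2 * ((j : ℝ) - 1) ^ (2 - α) + ((j : ℝ) - 2) ^ (2 - α)) := by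
  obtain ⟨hα0, hα1⟩ := hα
  have hj2 : (2 : ℝ) ≤ (j : ℝ) := by exact_mod_cast hj
  have hjn' : (j : ℝ) ≤ (n : ℝ) := by exact_mod_cast hjn
  have hΓ : 0 < Real.Gamma (1 - α) := Real.Gamma_pos_of_pos (by linarith)
  have h1α : (0:ℝ) < 1 - α := by linarith
  have h2α : (0:ℝ) < 2 - α := by linarith
  set a : ℝ := ((n : ℝ) - 1) * τ with ha
  set b : ℝ := (n : ℝ) * τ with hb
  set A : ℝ := ((n : ℝ) - (j : ℝ)) * τ with hA
  set B : ℝ := ((n : ℝ) - (j : ℝ) + 1) * τ with hB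
  have hab : a ≤ b := by rw [ha, hb]; nlinarith
  have hBa : B ≤ a := by rw [hB, ha]; nlinarith
  have step1 : acoef τ α n j = (1 / τ ^ 2) * ∫ t in a..b, ∫ s in A..B, omegaK α (t - s) := by
    unfold acoef
    congr 1
    apply intervalIntegral.integral_congr
    intro t ht
    rw [Set.uIcc_of_le hab] at ht
    simp only [← hB, min_eq_right (le_trans hBa ht.1)]
    rfl
  have inner : ∀ t : ℝ, (∫ s in A..B, omegaK α (t - s)) =
      ((t - A) ^ (1 - α) - (t - B) ^ (1 - α)) / ((1 - α) * Real.Gamma (1 - α)) := by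
    intro t
    unfold omegaK
    rw [intervalIntegral.integral_div,
      intervalIntegral.integral_comp_sub_left (fun u : ℝ => u ^ (-α)) t,
      integral_rpow (Or.inl (by linarith : (-1:ℝ) < -α))]
    have e : -α + 1 = 1 - α := by ring
    rw [e, div_div]
  rw [step1]
  simp only [inner]
  have c1 : Continuous fun t : ℝ => (t - A) ^ (1 - α) :=
    (Real.continuous_rpow_const h1α.le).comp (continuous_sub_right A)
  have c2 : Continuous fun t : ℝ => (t - B) ^ (1 - α) :=
    (Real.continuous_rpow_const h1α.le).comp (continuous_sub_right B)
  rw [intervalIntegral.integral_div,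
    intervalIntegral.integral_sub (c1.intervalIntegrable a b) (c2.intervalIntegrable a b),
    intervalIntegral.integral_comp_sub_right (fun u : ℝ => u ^ (1 - α)) A,
    intervalIntegral.integral_comp_sub_right (fun u : ℝ => u ^ (1 - α)) B,
    integral_rpow (Or.inl (by linarith : (-1:ℝ) < 1 - α)),
    integral_rpow (Or.inl (by linarith : (-1:ℝ) < 1 - α))]
  have e : 1 - α + 1 = 2 - α := by ring
  rw [e]
  have e1 : b - A = (j : ℝ) * τ := by rw [hb, hA]; ring
  have e2 : a - A = ((j : ℝ) - 1) * τ := by rw [ha, hA]; ring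
  have e3 : b - B = ((j : ℝ) - 1) * τ := by rw [hb, hB]; ring
  have e4 : a - B = ((j : ℝ) - 2) * τ := by rw [ha, hB]; ring
  rw [e1, e2, e3, e4]
  have m1 : ((j : ℝ) * τ) ^ (2 - α) = (j : ℝ) ^ (2 - α) * τ ^ (2 - α) :=
    Real.mul_rpow (by linarith) hτ.le
  have m2 : (((j : ℝ) - 1) * τ) ^ (2 - α) = ((j : ℝ) - 1) ^ (2 - α) * τ ^ (2 - α) :=
    Real.mul_rpow (by linarith) hτ.le
  have m3 : (((j : ℝ) - 2) * τ) ^ (2 - α) = ((j : ℝ) - 2) ^ (2 - α) * τ ^ (2 - α) :=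
    Real.mul_rpow (by linarith) hτ.le
  rw [m1, m2, m3]
  have hτ2 : τ ^ (2 - α) = τ ^ 2 * τ ^ (-α) := by
    rw [show (2:ℝ) - α = (2:ℕ) + -α by push_cast; ring, Real.rpow_add hτ, Real.rpow_natCast]
  rw [hτ2]
  have hτ0 : τ ≠ 0 := hτ.ne'
  field_simp
  ring

theorem stmt1 (T : ℝ) (hT : 0 < T) (N : ℕ) (hN : 0 < N) (τ : ℝ) (hτ : τ = T / N)
    (α : ℝ) (hα : α ∈ Set.Ioo (0 : ℝ) 1)
    (n : ℕ) (hn1 : 2 ≤ n) (hnN : n ≤ N) :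
    ∀ j j' : ℕ, 2 ≤ j → j < j' → j' ≤ n →
      acoef τ α n j > acoef τ α n j' ∧ acoef τ α n j' > 0 := by
  intro j j' hj hjj' hj'n
  have hN' : (0:ℝ) < (N:ℝ) := by exact_mod_cast hN
  have hτ0 : 0 < τ := by rw [hτ]; positivity
  have hjn : j ≤ n := le_trans hjj'.le hj'n
  have hj' : 2 ≤ j' := le_trans hj hjj'.le
  have hΓ : 0 < Real.Gamma (1 - α) := Real.Gamma_pos_of_pos (by linarith [hα.2])
  have h1α : (0:ℝ) < 1 - α := by linarith [hα.2]
  have h2α : (0:ℝ) < 2 - α := by linarith [hα.2]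
  have hc : 0 < τ ^ (-α) / (Real.Gamma (1 - α) * ((1 - α) * (2 - α))) := by
    apply div_pos (Real.rpow_pos_of_pos hτ0 _)
    positivity
  rw [acoef_eq hτ0 hα hj hjn, acoef_eq hτ0 hα hj' hj'n]
  have hj2 : (2:ℝ) ≤ (j:ℝ) := by exact_mod_cast hj
  have hj'2 : (2:ℝ) ≤ (j':ℝ) := by exact_mod_cast hj'
  have hjj'' : (j:ℝ) < (j':ℝ) := by exact_mod_cast hjj'
  -- rewrite via φ at x = j-1 and x = j'-1
  have ej1 : (j:ℝ) - 1 + 1 = (j:ℝ) := by ring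
  have ej2 : (j:ℝ) - 1 - 1 = (j:ℝ) - 2 := by ring
  have ej1' : (j':ℝ) - 1 + 1 = (j':ℝ) := by ring
  have ej2' : (j':ℝ) - 1 - 1 = (j':ℝ) - 2 := by ring
  constructor
  · have h := phi_anti hα (show (j:ℝ) - 1 ∈ Set.Ici (1:ℝ) by simp; linarith)
      (show (j':ℝ) - 1 ∈ Set.Ici (1:ℝ) by simp; linarith) (by linarith)
    simp only [ej1, ej2, ej1', ej2'] at h
    exact mul_lt_mul_of_pos_left h hc
  · have h := phi_pos hα (show (1:ℝ) ≤ (j':ℝ) - 1 by linarith)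
    rw [ej1', ej2'] at h
    exact mul_pos hc h
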